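/- Let d ≥ 1, Ω = [-1,1]^d, δ > 0, and Ω_δ = Ω \ B(0;δ). Let f : ℝ^d → ℝ^d be L_f-Lipschitz on Ω with f(0) = 0, where 0 ∈ Ω. Let γ > 0 and ε ∈ (0, γ/(√d · L_f)). Suppose V, V* : ℝ^d → ℝ are differentiable on a neighborhood of Ω, that DV*(x) · f(x) ≤ −γ‖x‖ for all x ∈ Ω_δ, and that |∂_i V(x) − ∂_i V*(x)| ≤ ε for all x ∈ Ω_δ and every coordinate i ∈ {1,…,d}. Then DV(x) · f(x) ≤ −(γ − ε√d·L_f)‖x‖ for all x ∈ Ω_δ, and γ − ε√d·L_f > 0. -/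

import Mathlib

open scoped RealInnerProductSpace

/-- If `f` is `L_f`-Lipschitz on `Ω = [-1,1]^d` with `f 0 = 0`,
`V, V*` are differentiable on a neighborhood of `Ω`, `DV*(x)·f(x) ≤ -γ‖x‖` on `Ω_δ`,
and the partial derivatives of `V` and `V*` differ by at most `ε < γ/(√d L_f)` on `Ω_δ`,
then `DV(x)·f(x) ≤ -(γ - ε√d L_f)‖x‖` on `Ω_δ`, and `γ - ε√d L_f > 0`. -/
theorem stmt_3 (d : ℕ) (hd : 1 ≤ d) (δ : ℝ) (hδ : 0 < δ)
    (Lf γ ε : ℝ) (hLf : 0 < Lf) (hγ : 0 < γ)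
    (hε : ε ∈ Set.Ioo (0 : ℝ) (γ / (Real.sqrt d * Lf)))
    (Ω Ωδ : Set (EuclideanSpace ℝ (Fin d)))
    (hΩ : Ω = {x : EuclideanSpace ℝ (Fin d) | ∀ i, |x i| ≤ 1})
    (hΩδ : Ωδ = Ω \ Metric.ball 0 δ)
    (f : EuclideanSpace ℝ (Fin d) → EuclideanSpace ℝ (Fin d))
    (hf : ∀ x ∈ Ω, ∀ y ∈ Ω, ‖f x - f y‖ ≤ Lf * ‖x - y‖) (hf0 : f 0 = 0)
    (V Vstar : EuclideanSpace ℝ (Fin d) → ℝ)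
    (hV : ∃ U, IsOpen U ∧ Ω ⊆ U ∧ ∀ x ∈ U, DifferentiableAt ℝ V x)
    (hVstar : ∃ U, IsOpen U ∧ Ω ⊆ U ∧ ∀ x ∈ U, DifferentiableAt ℝ Vstar x)
    (hod : ∀ x ∈ Ωδ, (inner ℝ (gradient Vstar x) (f x) : ℝ) ≤ -γ * ‖x‖)
    (hgrad : ∀ x ∈ Ωδ, ∀ i, |gradient V x i - gradient Vstar x i| ≤ ε) :
    (∀ x ∈ Ωδ, (inner ℝ (gradient V x) (f x) : ℝ) ≤ -(γ - ε * Real.sqrt d * Lf) * ‖x‖) ∧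
    0 < γ - ε * Real.sqrt d * Lf := by
  have hsd : (0:ℝ) < Real.sqrt d := Real.sqrt_pos.mpr (by exact_mod_cast Nat.pos_of_ne_zero (by omega))
  have hpos : 0 < γ - ε * Real.sqrt d * Lf := by
    have h := hε.2
    rw [lt_div_iff₀ (by positivity)] at h
    nlinarith
  refine ⟨fun x hx => ?_, hpos⟩
  have hxΩ : x ∈ Ω := (hΩδ ▸ hx).1
  have h0Ω : (0 : EuclideanSpace ℝ (Fin d)) ∈ Ω := by
    rw [hΩ]; intro i; simp
  have hfx : ‖f x‖ ≤ Lf * ‖x‖ := by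
    have := hf x hxΩ 0 h0Ω
    simpa [hf0] using this
  have hgn : ‖gradient V x - gradient Vstar x‖ ≤ ε * Real.sqrt d := by
    have hbd : ∀ i, |(gradient V x - gradient Vstar x) i| ≤ ε := by
      intro i
      simpa using hgrad x hx i
    rw [EuclideanSpace.norm_eq]
    calc Real.sqrt (∑ i, ‖(gradient V x - gradient Vstar x) i‖ ^ 2)
        ≤ Real.sqrt (∑ _i : Fin d, ε ^ 2) := by
          apply Real.sqrt_le_sqrt
          apply Finset.sum_le_sum
          intro i _
          have := hbd i
          have h2 : ‖(gradient V x - gradient Vstar x) i‖ = |(gradient V x - gradient Vstar x) i| := rfl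
          nlinarith [abs_nonneg ((gradient V x - gradient Vstar x) i)]
      _ = ε * Real.sqrt d := by
          rw [Finset.sum_const, Finset.card_univ, Fintype.card_fin, nsmul_eq_mul]
          rw [Real.sqrt_mul (by positivity)]
          rw [Real.sqrt_sq hε.1.le, mul_comm]
  have key : (inner ℝ (gradient V x - gradient Vstar x) (f x) : ℝ) ≤ ε * Real.sqrt d * (Lf * ‖x‖) := by
    calc (inner ℝ (gradient V x - gradient Vstar x) (f x) : ℝ)
        ≤ ‖gradient V x - gradient Vstar x‖ * ‖f x‖ := real_inner_le_norm _ _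
      _ ≤ ε * Real.sqrt d * (Lf * ‖x‖) := by
          apply mul_le_mul hgn hfx (norm_nonneg _) (mul_nonneg hε.1.le hsd.le)
  have hsub : (inner ℝ (gradient V x) (f x) : ℝ) = inner ℝ (gradient Vstar x) (f x) + inner ℝ (gradient V x - gradient Vstar x) (f x) := by
    rw [inner_sub_left]; ring
  rw [hsub]
  have := hod x hx
  nlinarith
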